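/- Let t ∈ (0,1), n ∈ ℕ, and let F : [1−t, 1+t] → ℝ be continuous. For φ ∈ [0,π] set r(φ) = √(t² + 1 − 2t cos φ). Then ∫₀^π T_n((r(φ)² + 1 − t²)/(2 r(φ)))·F(r(φ)) dφ = ∫_{1−t}^{1+t} T_n((r² + 1 − t²)/(2r))·F(r) / √(1 − ((r² + 1 − t²)/(2r))²) dr, where the right-hand side is a convergent improper integral. -/

import Mathlib

open MeasureTheory Real Polynomial

/-- Change of variables `r = √(t² + 1 − 2t cos φ)` in the angular integral arising in the
Fourier decomposition of the lemon transform. -/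
theorem chebyshev_angular_change_of_variables
    (t : ℝ) (ht : t ∈ Set.Ioo (0 : ℝ) 1) (n : ℕ) (F : ℝ → ℝ)
    (hF : ContinuousOn F (Set.Icc (1 - t) (1 + t))) :
    IntegrableOn
      (fun r : ℝ =>
        (Chebyshev.T ℝ (n : ℤ)).eval ((r ^ 2 + 1 - t ^ 2) / (2 * r)) * F r /
          Real.sqrt (1 - ((r ^ 2 + 1 - t ^ 2) / (2 * r)) ^ 2))
      (Set.Ioo (1 - t) (1 + t)) volume ∧
    (∫ φ in Set.Ioo (0 : ℝ) Real.pi,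
        (Chebyshev.T ℝ (n : ℤ)).eval
            ((Real.sqrt (t ^ 2 + 1 - 2 * t * Real.cos φ) ^ 2 + 1 - t ^ 2) /
              (2 * Real.sqrt (t ^ 2 + 1 - 2 * t * Real.cos φ))) *
          F (Real.sqrt (t ^ 2 + 1 - 2 * t * Real.cos φ))) =
      ∫ r in Set.Ioo (1 - t) (1 + t),
        (Chebyshev.T ℝ (n : ℤ)).eval ((r ^ 2 + 1 - t ^ 2) / (2 * r)) * F r /
          Real.sqrt (1 - ((r ^ 2 + 1 - t ^ 2) / (2 * r)) ^ 2) := by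
  obtain ⟨ht0, ht1⟩ := ht
  set f : ℝ → ℝ := fun r =>
    (Chebyshev.T ℝ (n : ℤ)).eval ((r ^ 2 + 1 - t ^ 2) / (2 * r)) * F r /
      Real.sqrt (1 - ((r ^ 2 + 1 - t ^ 2) / (2 * r)) ^ 2) with hf_def
  set g : ℝ → ℝ := fun φ => Real.sqrt (t ^ 2 + 1 - 2 * t * Real.cos φ) with hg_def
  set g' : ℝ → ℝ := fun φ => t * Real.sin φ / g φ with hg'_def
  set G : ℝ → ℝ := fun φ =>
    (Chebyshev.T ℝ (n : ℤ)).eval ((g φ ^ 2 + 1 - t ^ 2) / (2 * g φ)) * F (g φ) with hG_def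
  -- basic positivity of the argument of the square root
  have harg : ∀ φ : ℝ, (1 - t) ^ 2 ≤ t ^ 2 + 1 - 2 * t * Real.cos φ := by
    intro φ
    nlinarith [Real.cos_le_one φ, ht0]
  have hargpos : ∀ φ : ℝ, 0 < t ^ 2 + 1 - 2 * t * Real.cos φ := by
    intro φ
    have := harg φ
    nlinarith
  have hgpos : ∀ φ : ℝ, 0 < g φ := fun φ => Real.sqrt_pos.mpr (hargpos φ)
  have hgsq : ∀ φ : ℝ, g φ ^ 2 = t ^ 2 + 1 - 2 * t * Real.cos φ := fun φ =>
    Real.sq_sqrt (hargpos φ).le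
  have hgcont : Continuous g := by
    apply Real.continuous_sqrt.comp
    continuity
  -- derivative
  have hderiv : ∀ φ ∈ Set.Ioo (0 : ℝ) π,
      HasDerivWithinAt g (g' φ) (Set.Ioo (0 : ℝ) π) φ := by
    intro φ _
    have h1 : HasDerivAt (fun x => t ^ 2 + 1 - 2 * t * Real.cos x) (2 * t * Real.sin φ) φ := by
      have := ((Real.hasDerivAt_cos φ).const_mul (2 * t)).const_sub (t ^ 2 + 1)
      exact this.congr_deriv (by ring)
    have h2 := h1.sqrt (ne_of_gt (hargpos φ))
    have : 2 * t * Real.sin φ / (2 * Real.sqrt (t ^ 2 + 1 - 2 * t * Real.cos φ)) = g' φ := by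
      rw [hg'_def]
      have := hgpos φ
      rw [hg_def]
      field_simp
    rw [← this]
    exact h2.hasDerivWithinAt
  -- injectivity
  have hinj : Set.InjOn g (Set.Ioo (0 : ℝ) π) := by
    intro a ha b hb hab
    have h1 : t ^ 2 + 1 - 2 * t * Real.cos a = t ^ 2 + 1 - 2 * t * Real.cos b := by
      have := congrArg (fun x => x ^ 2) hab
      simpa [hgsq] using this
    have hcos : Real.cos a = Real.cos b := by
      have h2t : (2 * t) ≠ 0 := by positivity
      have h3 : 2 * t * Real.cos a = 2 * t * Real.cos b := by linarith
      exact mul_left_cancel₀ h2t h3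
    exact Real.injOn_cos ⟨ha.1.le, ha.2.le⟩ ⟨hb.1.le, hb.2.le⟩ hcos
  -- image
  have himage : g '' Set.Ioo (0 : ℝ) π = Set.Ioo (1 - t) (1 + t) := by
    apply Set.Subset.antisymm
    · rintro _ ⟨φ, hφ, rfl⟩
      have hc1 : Real.cos φ < 1 := by
        have := Real.strictAntiOn_cos (Set.left_mem_Icc.mpr Real.pi_pos.le)
          ⟨hφ.1.le, hφ.2.le⟩ hφ.1
        simpa using this
      have hc2 : -1 < Real.cos φ := by
        have := Real.strictAntiOn_cos ⟨hφ.1.le, hφ.2.le⟩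
          (Set.right_mem_Icc.mpr Real.pi_pos.le) hφ.2
        simpa using this
      constructor
      · have : (1 - t) ^ 2 < t ^ 2 + 1 - 2 * t * Real.cos φ := by nlinarith
        have h := Real.sqrt_lt_sqrt (by positivity) this
        rwa [Real.sqrt_sq (by linarith)] at h
      · have : t ^ 2 + 1 - 2 * t * Real.cos φ < (1 + t) ^ 2 := by nlinarith
        have h := Real.sqrt_lt_sqrt (hargpos φ).le this
        rwa [Real.sqrt_sq (by linarith)] at h
    · have h0 : g 0 = 1 - t := by
        rw [hg_def]; simp only [Real.cos_zero]
        rw [show t ^ 2 + 1 - 2 * t * 1 = (1 - t) ^ 2 by ring, Real.sqrt_sq (by linarith)]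
      have hπ : g π = 1 + t := by
        rw [hg_def]; simp only [Real.cos_pi]
        rw [show t ^ 2 + 1 - 2 * t * (-1) = (1 + t) ^ 2 by ring, Real.sqrt_sq (by linarith)]
      have := intermediate_value_Ioo (a := (0:ℝ)) (b := π) Real.pi_pos.le
        (hgcont.continuousOn (s := Set.Icc 0 π))
      rw [h0, hπ] at this
      exact this
  -- pointwise identity on Ioo 0 π
  have hpt : ∀ φ ∈ Set.Ioo (0 : ℝ) π, |g' φ| • f (g φ) = G φ := by
    intro φ hφ
    have hsin : 0 < Real.sin φ := Real.sin_pos_of_pos_of_lt_pi hφ.1 hφ.2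
    have hgp := hgpos φ
    have hg'pos : 0 < g' φ := by
      rw [hg'_def]; positivity
    have hu : 1 - ((g φ ^ 2 + 1 - t ^ 2) / (2 * g φ)) ^ 2 = (t * Real.sin φ / g φ) ^ 2 := by
      have hnum : g φ ^ 2 + 1 - t ^ 2 = 2 * (1 - t * Real.cos φ) := by rw [hgsq]; ring
      have key : (t * Real.sin φ) ^ 2 = g φ ^ 2 - (1 - t * Real.cos φ) ^ 2 := by
        rw [hgsq]; nlinarith [Real.sin_sq_add_cos_sq φ]
      rw [hnum, div_pow, div_pow, key, mul_pow, mul_pow]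
      have h4 : ((2:ℝ)) ^ 2 * g φ ^ 2 ≠ 0 := by positivity
      field_simp
    rw [smul_eq_mul, abs_of_pos hg'pos, hf_def]
    simp only
    rw [hu, Real.sqrt_sq hg'pos.le]
    rw [hG_def]
    field_simp
  -- integrability of G on Ioo 0 π
  have hGint : IntegrableOn G (Set.Ioo (0 : ℝ) π) := by
    have hmaps : Set.MapsTo g (Set.Icc 0 π) (Set.Icc (1 - t) (1 + t)) := by
      intro φ _
      constructor
      · have : (1 - t) ^ 2 ≤ t ^ 2 + 1 - 2 * t * Real.cos φ := harg φ
        have h := Real.sqrt_le_sqrt this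
        rwa [Real.sqrt_sq (by linarith)] at h
      · have : t ^ 2 + 1 - 2 * t * Real.cos φ ≤ (1 + t) ^ 2 := by
          nlinarith [Real.neg_one_le_cos φ]
        have h := Real.sqrt_le_sqrt this
        rwa [Real.sqrt_sq (by linarith)] at h
    have hGcont : ContinuousOn G (Set.Icc 0 π) := by
      have hc1 : Continuous fun φ => (Chebyshev.T ℝ (n : ℤ)).eval ((g φ ^ 2 + 1 - t ^ 2) / (2 * g φ)) := by
        apply (Polynomial.continuous _).comp
        apply Continuous.div (((hgcont.pow 2).add continuous_const).sub continuous_const)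
          (continuous_const.mul hgcont)
        intro φ; have := hgpos φ; exact mul_ne_zero two_ne_zero this.ne'
      exact hc1.continuousOn.mul (hF.comp hgcont.continuousOn hmaps)
    exact (hGcont.integrableOn_compact isCompact_Icc).mono_set Set.Ioo_subset_Icc_self
  have hsm : MeasurableSet (Set.Ioo (0 : ℝ) π) := measurableSet_Ioo
  have hint : IntegrableOn f (Set.Ioo (1 - t) (1 + t)) := by
    rw [← himage]
    rw [integrableOn_image_iff_integrableOn_abs_deriv_smul hsm hderiv hinj f]
    exact hGint.congr_fun (fun φ hφ => (hpt φ hφ).symm) hsm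
  refine ⟨hint, ?_⟩
  have hcov := integral_image_eq_integral_abs_deriv_smul hsm hderiv hinj f
  rw [himage] at hcov
  rw [hcov]
  exact setIntegral_congr_fun hsm fun φ hφ => (hpt φ hφ).symm
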